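/- Let E be a vector lattice with the principal projection property, F a Dedekind complete vector lattice, Φ : 𝔅(E) → 𝔅(F) a Boolean homomorphism, and T : E → F a positive orthogonally additive operator. For each finite partition of identity (π₁,…,πₙ) ∈ 𝔇₀ consider the operator x ↦ Σᵢ Φ(πᵢ)(T(πᵢ x)). Then: (i) the family of these operators is downward directed (a common refinement of two partitions gives a pointwise smaller operator); (ii) for every x ∈ E the infimum R(T)(x) := inf { Σᵢ Φ(πᵢ)(T(πᵢ x)) : (πᵢ) ∈ 𝔇₀ } exists in F; (iii) the map R(T) : E → F is orthogonally additive and satisfies 0 ≤ R(T)(x) ≤ T x for all x ∈ E. -/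

import Mathlib

namespace VL

/-- Two elements of a vector lattice are disjoint if `|x| ⊓ |y| = 0`. -/
def VDisjoint {G : Type*} [Lattice G] [AddCommGroup G] (x y : G) : Prop :=
  |x| ⊓ |y| = 0

/-- `y` is a fragment of `x` if `y ⊥ (x - y)`. -/
def Fragment {G : Type*} [Lattice G] [AddCommGroup G] (y x : G) : Prop :=
  VDisjoint y (x - y)

/-- An order projection: a linear idempotent `π` with `0 ≤ π x ≤ x` for all `x ≥ 0`. -/
def IsOrderProjection {G : Type*} [Lattice G] [AddCommGroup G] [Module ℝ G]
    (π : G →ₗ[ℝ] G) : Prop :=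
  (∀ x, π (π x) = π x) ∧ ∀ x : G, 0 ≤ x → 0 ≤ π x ∧ π x ≤ x

/-- A map between the order projections of `E` and of `F` is a Boolean homomorphism if it
maps order projections to order projections and preserves the Boolean operations
`π ∧ ρ = π ∘ ρ`, `π ∨ ρ = π + ρ - π ∘ ρ` and `compl π = Id - π`. -/
def IsBooleanHom {E F : Type*} [Lattice E] [AddCommGroup E] [Module ℝ E]
    [Lattice F] [AddCommGroup F] [Module ℝ F]
    (Φ : (E →ₗ[ℝ] E) → (F →ₗ[ℝ] F)) : Prop :=
  (∀ π, IsOrderProjection π → IsOrderProjection (Φ π)) ∧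
  (∀ π ρ, IsOrderProjection π → IsOrderProjection ρ →
    Φ (π ∘ₗ ρ) = Φ π ∘ₗ Φ ρ) ∧
  (∀ π ρ, IsOrderProjection π → IsOrderProjection ρ →
    Φ (π + ρ - π ∘ₗ ρ) = Φ π + Φ ρ - Φ π ∘ₗ Φ ρ) ∧
  (∀ π, IsOrderProjection π → Φ (LinearMap.id - π) = LinearMap.id - Φ π)

/-- `T` is atomic subordinate to `Φ` if `T (π x) = Φ(π) (T x)` for every order projection. -/
def IsAtomic {E F : Type*} [Lattice E] [AddCommGroup E] [Module ℝ E]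
    [Lattice F] [AddCommGroup F] [Module ℝ F]
    (Φ : (E →ₗ[ℝ] E) → (F →ₗ[ℝ] F)) (T : E → F) : Prop :=
  ∀ π : E →ₗ[ℝ] E, IsOrderProjection π → ∀ x : E, T (π x) = Φ π (T x)

/-- The principal projection property: for every `x` there is an order projection `π_x`
(the projection onto the band generated by `x`) such that `z - π_x z ⊥ x` for all `z`,
and `π_x z ⊥ w` whenever `w ⊥ x`. -/
def HasPPP (E : Type*) [Lattice E] [AddCommGroup E] [Module ℝ E] : Prop :=
  ∀ x : E, ∃ π : E →ₗ[ℝ] E, IsOrderProjection π ∧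
    (∀ z : E, VDisjoint (z - π z) x) ∧
    (∀ z w : E, VDisjoint w x → VDisjoint (π z) w)

/-- Dedekind completeness: every nonempty set bounded above has a supremum. -/
def DedekindComplete (F : Type*) [Lattice F] : Prop :=
  ∀ S : Set F, S.Nonempty → BddAbove S → ∃ b, IsLUB S b


set_option linter.unusedSectionVars false
set_option maxHeartbeats 1000000
open Pointwise

section Helpers
variable {G : Type*} [Lattice G] [AddCommGroup G] [CovariantClass G G (· + ·) (· ≤ ·)]

/-- A lattice-ordered commutative group is an ordered additive commutative monoid. -/
def auxOACM (G : Type*) [Lattice G] [AddCommGroup G]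
    [CovariantClass G G (· + ·) (· ≤ ·)] : IsOrderedAddMonoid G :=
  { add_le_add_left := fun _ _ h c => add_le_add h le_rfl }

attribute [local instance] auxOACM

lemma aux_abs_eq_zero {a : G} (h : |a| = 0) : a = 0 :=
  le_antisymm (h ▸ le_abs_self a) (neg_nonpos.mp (h ▸ neg_le_abs a))

lemma aux_inf_add {a b c : G} (ha : 0 ≤ a) (hb : 0 ≤ b) (hc : 0 ≤ c) :
    a ⊓ (b + c) ≤ a ⊓ b + a ⊓ c := by
  set m := a ⊓ (b + c) with hm
  have hma : m ≤ a := inf_le_left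
  have hmbc : m ≤ b + c := inf_le_right
  have h1 : m - a ⊓ b ≤ a ⊓ c := by
    rw [sub_inf]
    refine sup_le (le_inf ?_ ?_) (le_inf ?_ ?_)
    · exact sub_le_iff_le_add.2 (hma.trans (le_add_of_nonneg_right ha))
    · exact sub_le_iff_le_add.2 (hma.trans (le_add_of_nonneg_left hc))
    · exact sub_le_iff_le_add.2 (hma.trans (le_add_of_nonneg_right hb))
    · exact sub_le_iff_le_add.2 (hmbc.trans (le_of_eq (add_comm b c)))
  have := sub_le_iff_le_add.mp h1
  rwa [add_comm] at this

lemma aux_eq_zero {a b c : G} (hab : a ⊓ b = 0) (hac : a ⊓ c = 0)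
    (ha : 0 ≤ a) (hb : 0 ≤ b) (hc : 0 ≤ c) (h : a ≤ b + c) : a = 0 := by
  have h0 : a = a ⊓ (b + c) := (inf_eq_left.mpr h).symm
  have := aux_inf_add ha hb hc
  rw [hab, hac, add_zero] at this
  exact le_antisymm (h0 ▸ this) ha

lemma aux_vdisj_mono {a b a' b' : G} (h : a ⊓ b = 0) (ha : 0 ≤ a') (hb : 0 ≤ b')
    (ha' : a' ≤ a) (hb' : b' ≤ b) : a' ⊓ b' = 0 :=
  le_antisymm (h ▸ inf_le_inf ha' hb') (le_inf ha hb)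

lemma VDisjoint.symm' {x y : G} (h : VDisjoint x y) : VDisjoint y x := by
  rw [VDisjoint, inf_comm]; exact h

end Helpers

section OP
variable {G : Type*} [Lattice G] [AddCommGroup G] [Module ℝ G]
  [CovariantClass G G (· + ·) (· ≤ ·)]
variable {π ρ : G →ₗ[ℝ] G}

lemma OP.mono (hπ : IsOrderProjection π) {a b : G} (h : a ≤ b) : π a ≤ π b := by
  have h0 : 0 ≤ π (b - a) := (hπ.2 _ (sub_nonneg.2 h)).1
  rw [map_sub, sub_nonneg] at h0
  exact h0

lemma OP.abs_le (hπ : IsOrderProjection π) (a : G) : |π a| ≤ π |a| := by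
  rw [abs_le']
  refine ⟨OP.mono hπ (le_abs_self a), ?_⟩
  rw [← map_neg]
  exact OP.mono hπ (neg_le_abs a)

lemma OP.disj_comp (hπ : IsOrderProjection π) {x y : G} (hx : 0 ≤ x) (hy : 0 ≤ y) :
    π x ⊓ (y - π y) = 0 := by
  set u := π x ⊓ (y - π y) with hu
  have hu0 : 0 ≤ u := le_inf (hπ.2 x hx).1 (sub_nonneg.2 (hπ.2 y hy).2)
  have hπu : π u = 0 := by
    have h1 : π u ≤ π y - π y := by
      have := OP.mono hπ (inf_le_right : u ≤ y - π y)
      rwa [map_sub, hπ.1 y] at this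
    rw [sub_self] at h1
    exact le_antisymm h1 (hπ.2 u hu0).1
  have h2 : u ≤ 0 := by
    have h3 : 0 ≤ π x - u := sub_nonneg.2 inf_le_left
    have h4 : π (π x - u) ≤ π x - u := (hπ.2 _ h3).2
    rw [map_sub, hπ.1 x, hπu, sub_zero] at h4
    have h5 := sub_nonneg.2 h4
    rw [sub_sub_cancel_left] at h5
    exact neg_nonneg.mp h5
  exact le_antisymm h2 hu0

lemma OP.inf_eq (hπ : IsOrderProjection π) (hρ : IsOrderProjection ρ) {x : G} (hx : 0 ≤ x) :
    π (ρ x) = π x ⊓ ρ x := by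
  have hρx : 0 ≤ ρ x := (hρ.2 x hx).1
  have hle : π (ρ x) ≤ π x ⊓ ρ x :=
    le_inf (OP.mono hπ (hρ.2 x hx).2) (hπ.2 _ hρx).2
  have hge : π x ⊓ ρ x ≤ π (ρ x) := by
    have h1 : π x ⊓ ρ x - π (ρ x) ≤ π x ⊓ (ρ x - π (ρ x)) := by
      refine le_inf (sub_le_iff_le_add.2 ?_) (sub_le_sub_right inf_le_right _)
      exact inf_le_left.trans (le_add_of_nonneg_right (hπ.2 _ hρx).1)
    have h2 := h1.trans (le_of_eq (OP.disj_comp hπ hx hρx))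
    exact sub_nonpos.mp h2
  exact le_antisymm hle hge

lemma OP.ext_pos {f g : G →ₗ[ℝ] G} (h : ∀ x : G, 0 ≤ x → f x = g x) : f = g := by
  ext x
  have hx : x = x⁺ - x⁻ := (posPart_sub_negPart x).symm
  rw [hx, map_sub, map_sub, h _ (posPart_nonneg x), h _ (negPart_nonneg x)]

lemma OP.comm (hπ : IsOrderProjection π) (hρ : IsOrderProjection ρ) : π ∘ₗ ρ = ρ ∘ₗ π := by
  refine OP.ext_pos (fun x hx => ?_)
  simp only [LinearMap.comp_apply]
  rw [OP.inf_eq hπ hρ hx, OP.inf_eq hρ hπ hx, inf_comm]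

lemma OP.comp (hπ : IsOrderProjection π) (hρ : IsOrderProjection ρ) :
    IsOrderProjection (π ∘ₗ ρ) := by
  constructor
  · intro x
    simp only [LinearMap.comp_apply]
    have h1 : ρ (π (ρ x)) = π (ρ (ρ x)) := by
      have := OP.comm hρ hπ
      exact congrArg (fun f => f (ρ x)) (congrArg DFunLike.coe this) |>.symm ▸ rfl
    calc π (ρ (π (ρ x))) = π (π (ρ (ρ x))) := by
          rw [show ρ (π (ρ x)) = π (ρ (ρ x)) from congrFun (congrArg DFunLike.coe (OP.comm hρ hπ)) (ρ x)]
      _ = π (ρ x) := by rw [hπ.1, hρ.1]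
  · intro x hx
    have hρx := hρ.2 x hx
    have := hπ.2 (ρ x) hρx.1
    exact ⟨this.1, this.2.trans hρx.2⟩

lemma OP.id : IsOrderProjection (LinearMap.id : G →ₗ[ℝ] G) :=
  ⟨fun _ => rfl, fun x hx => ⟨hx, le_refl x⟩⟩

lemma OP.zero : IsOrderProjection (0 : G →ₗ[ℝ] G) :=
  ⟨fun _ => by simp, fun x hx => by simp [hx]⟩

lemma OP.compl (hπ : IsOrderProjection π) : IsOrderProjection (LinearMap.id - π) := by
  constructor
  · intro x
    simp only [LinearMap.sub_apply, LinearMap.id_apply, map_sub, hπ.1]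
    abel
  · intro x hx
    have := hπ.2 x hx
    simp only [LinearMap.sub_apply, LinearMap.id_apply]
    exact ⟨sub_nonneg.2 this.2, sub_le_self x this.1⟩

lemma OP.vdisj (hπ : IsOrderProjection π) (hρ : IsOrderProjection ρ)
    (h : π ∘ₗ ρ = 0) (x y : G) : VDisjoint (π x) (ρ y) := by
  set z := |x| + |y| with hz
  have hz0 : (0:G) ≤ z := add_nonneg (abs_nonneg x) (abs_nonneg y)
  have hkey : π z ⊓ ρ z = 0 := by
    rw [← OP.inf_eq hπ hρ hz0]
    have := congrFun (congrArg DFunLike.coe h) z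
    simpa using this
  refine aux_vdisj_mono hkey (abs_nonneg _) (abs_nonneg _) ?_ ?_
  · exact (OP.abs_le hπ x).trans (OP.mono hπ (le_add_of_nonneg_right (abs_nonneg y)))
  · exact (OP.abs_le hρ y).trans (OP.mono hρ (le_add_of_nonneg_left (abs_nonneg x)))

end OP


variable {E F : Type*}
  [Lattice E] [AddCommGroup E] [Module ℝ E]
  [CovariantClass E E (· + ·) (· ≤ ·)] [PosSMulMono ℝ E]
  [Lattice F] [AddCommGroup F] [Module ℝ F]
  [CovariantClass F F (· + ·) (· ≤ ·)] [PosSMulMono ℝ F]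

/-- A finite partition of the identity: finitely many pairwise disjoint order projections
summing to the identity. -/
def IsPartitionOfIdentity {E : Type*} [Lattice E] [AddCommGroup E] [Module ℝ E]
    {n : ℕ} (π : Fin n → E →ₗ[ℝ] E) : Prop :=
  (∀ i, IsOrderProjection (π i)) ∧
  (∀ i j, i ≠ j → (π i) ∘ₗ (π j) = 0) ∧
  (∑ i, π i) = LinearMap.id


section PartLemmas
variable {G : Type*} [Lattice G] [AddCommGroup G] [Module ℝ G]
  [CovariantClass G G (· + ·) (· ≤ ·)]
variable {n : ℕ} {π : Fin n → G →ₗ[ℝ] G}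

attribute [local instance] auxOACM

lemma Part.compApply (h : IsPartitionOfIdentity π) {i j : Fin n} (hij : i ≠ j) (x : G) :
    π i (π j x) = 0 := by
  have := congrFun (congrArg DFunLike.coe (h.2.1 i j hij)) x
  simpa using this

lemma Part.total (h : IsPartitionOfIdentity π) (x : G) : ∑ i, π i x = x := by
  have := congrFun (congrArg DFunLike.coe h.2.2) x
  simpa [LinearMap.sum_apply] using this

lemma Part.sum_OP (h : IsPartitionOfIdentity π) (s : Finset (Fin n)) :
    IsOrderProjection (∑ i ∈ s, π i) := by
  constructor
  · intro x
    simp only [LinearMap.sum_apply, map_sum]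
    refine Finset.sum_congr rfl (fun i hi => ?_)
    rw [Finset.sum_eq_single_of_mem i hi (fun j _ hji => Part.compApply h hji x)]
    exact (h.1 i).1 x
  · intro x hx
    have happ : (∑ i ∈ s, π i) x = ∑ i ∈ s, π i x := by rw [LinearMap.sum_apply]
    constructor
    · rw [happ]
      apply Finset.sum_nonneg
      intro i _
      exact ((h.1 i).2 x hx).1
    · rw [happ]
      have hle : ∑ i ∈ s, π i x ≤ ∑ i, π i x := by
        apply Finset.sum_le_sum_of_subset_of_nonneg (Finset.subset_univ s)
        intro i _ _
        exact ((h.1 i).2 x hx).1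
      exact hle.trans (le_of_eq (Part.total h x))

lemma Part.comp_sum_zero (h : IsPartitionOfIdentity π) {s : Finset (Fin n)} {j : Fin n}
    (hj : j ∉ s) : π j ∘ₗ (∑ i ∈ s, π i) = 0 := by
  ext x
  simp only [LinearMap.comp_apply, LinearMap.sum_apply, map_sum, LinearMap.zero_apply]
  refine Finset.sum_eq_zero (fun i hi => Part.compApply h (fun hji => hj (by rw [hji]; exact hi)) x)

lemma Part.T_sum {F' : Type*} [Lattice F'] [AddCommGroup F'] (T : G → F')
    (hToa : ∀ x y : G, VDisjoint x y → T (x + y) = T x + T y)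
    (h : IsPartitionOfIdentity π) (x : G) : T x = ∑ i, T (π i x) := by
  have hT0 : T 0 = 0 := by
    have h0 := hToa 0 0 (by simp [VDisjoint])
    rw [add_zero] at h0
    exact (left_eq_add.mp h0)
  have key : ∀ s : Finset (Fin n), T ((∑ i ∈ s, π i) x) = ∑ i ∈ s, T (π i x) := by
    intro s
    induction s using Finset.induction_on with
    | empty => simpa using hT0
    | @insert j s hj ih =>
      have hsum : (∑ i ∈ insert j s, π i) x = π j x + (∑ i ∈ s, π i) x := by
        rw [Finset.sum_insert hj, LinearMap.add_apply]
      have hdis : VDisjoint (π j x) ((∑ i ∈ s, π i) x) :=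
        OP.vdisj (h.1 j) (Part.sum_OP h s) (Part.comp_sum_zero h hj) x x
      rw [hsum, hToa _ _ hdis, ih, Finset.sum_insert hj]
  have := key Finset.univ
  rw [h.2.2] at this
  simpa using this

end PartLemmas

/-- The set `{ Σᵢ Φ(πᵢ)(T(πᵢ x)) : (πᵢ) ∈ 𝔇₀ }` of values at `x` of the operators
associated to finite partitions of the identity. -/
def atomicSumSet (Φ : (E →ₗ[ℝ] E) → (F →ₗ[ℝ] F)) (T : E → F) (x : E) : Set F :=
  {w : F | ∃ (n : ℕ) (π : Fin n → E →ₗ[ℝ] E), IsPartitionOfIdentity π ∧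
    w = ∑ i, Φ (π i) (T (π i x))}


section MainLemmas
variable {E F : Type*}
  [Lattice E] [AddCommGroup E] [Module ℝ E]
  [CovariantClass E E (· + ·) (· ≤ ·)] [PosSMulMono ℝ E]
  [Lattice F] [AddCommGroup F] [Module ℝ F]
  [CovariantClass F F (· + ·) (· ≤ ·)] [PosSMulMono ℝ F]

attribute [local instance] auxOACM

variable {Φ : (E →ₗ[ℝ] E) → (F →ₗ[ℝ] F)} {T : E → F}

lemma BH.zero (hΦ : IsBooleanHom Φ) : Φ 0 = 0 := by
  have h1 := hΦ.2.1 0 (LinearMap.id - 0) OP.zero (OP.compl OP.zero)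
  have h2 := hΦ.2.2.2 0 OP.zero
  rw [h2] at h1
  have h0 : ((0 : E →ₗ[ℝ] E) ∘ₗ (LinearMap.id - 0)) = 0 := by ext x; simp
  rw [h0] at h1
  have hOP := hΦ.1 0 OP.zero
  ext x
  have h3 := congrFun (congrArg DFunLike.coe h1) x
  simp only [LinearMap.comp_apply, LinearMap.sub_apply, LinearMap.id_apply, map_sub] at h3
  rw [hOP.1 x, sub_self] at h3
  simpa using h3

lemma BH.id (hΦ : IsBooleanHom Φ) : Φ LinearMap.id = LinearMap.id := by
  have h2 := hΦ.2.2.2 0 OP.zero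
  rw [sub_zero, BH.zero hΦ, sub_zero] at h2
  exact h2

lemma atomic_nonneg (hΦ : IsBooleanHom Φ) (hTpos : ∀ x : E, 0 ≤ T x)
    {k : ℕ} {π : Fin k → E →ₗ[ℝ] E} (hπ : ∀ i, IsOrderProjection (π i)) (x : E) :
    0 ≤ ∑ i, Φ (π i) (T (π i x)) :=
  Finset.sum_nonneg fun i _ => ((hΦ.1 (π i) (hπ i)).2 _ (hTpos _)).1

lemma atomic_sum_le (hΦ : IsBooleanHom Φ) (hTpos : ∀ x : E, 0 ≤ T x)
    (hToa : ∀ x y : E, VDisjoint x y → T (x + y) = T x + T y)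
    {k : ℕ} {π : Fin k → E →ₗ[ℝ] E} (hπ : IsPartitionOfIdentity π) (z : E) :
    ∑ i, Φ (π i) (T (π i z)) ≤ T z := by
  have h1 : ∑ i, Φ (π i) (T (π i z)) ≤ ∑ i, T (π i z) :=
    Finset.sum_le_sum fun i _ => ((hΦ.1 (π i) (hπ.1 i)).2 _ (hTpos _)).2
  exact h1.trans (le_of_eq (Part.T_sum T hToa hπ z).symm)

lemma refine_lemma (hΦ : IsBooleanHom Φ) (hTpos : ∀ x : E, 0 ≤ T x)
    (hToa : ∀ x y : E, VDisjoint x y → T (x + y) = T x + T y)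
    {n m : ℕ} {π : Fin n → E →ₗ[ℝ] E} {ρ : Fin m → E →ₗ[ℝ] E}
    (hπ : IsPartitionOfIdentity π) (hρ : IsPartitionOfIdentity ρ) :
    ∃ σ : Fin (n * m) → E →ₗ[ℝ] E,
      IsPartitionOfIdentity σ ∧
      (∀ x : E, ∑ t, Φ (σ t) (T (σ t x)) = ∑ i, ∑ j, Φ (π i ∘ₗ ρ j) (T (π i (ρ j x)))) ∧
      (∀ x : E, ∑ t, Φ (σ t) (T (σ t x)) ≤ ∑ i, Φ (π i) (T (π i x))) ∧
      (∀ x : E, ∑ t, Φ (σ t) (T (σ t x)) ≤ ∑ j, Φ (ρ j) (T (ρ j x))) := by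
  classical
  set e := (finProdFinEquiv : Fin n × Fin m ≃ Fin (n * m)) with he
  have hcomm : ∀ i j, π i ∘ₗ ρ j = ρ j ∘ₗ π i := fun i j => OP.comm (hπ.1 i) (hρ.1 j)
  have hcommApp : ∀ i j (w : E), π i (ρ j w) = ρ j (π i w) := fun i j w =>
    congrFun (congrArg DFunLike.coe (hcomm i j)) w
  refine ⟨fun t => π (e.symm t).1 ∘ₗ ρ (e.symm t).2, ?_, ?_, ?_, ?_⟩
  case _ =>
    refine ⟨fun t => OP.comp (hπ.1 _) (hρ.1 _), ?_, ?_⟩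
    · intro t s hts
      ext x
      simp only [LinearMap.comp_apply, LinearMap.zero_apply]
      rw [(hcommApp (e.symm s).1 (e.symm t).2 (ρ (e.symm s).2 x)).symm]
      by_cases h1 : (e.symm t).1 = (e.symm s).1
      · have h2 : (e.symm t).2 ≠ (e.symm s).2 := by
          intro h2
          exact hts (e.symm.injective (Prod.ext h1 h2))
        rw [Part.compApply hρ h2 x, map_zero, map_zero]
      · rw [Part.compApply hπ h1 (ρ (e.symm t).2 (ρ (e.symm s).2 x))]
    · ext x
      simp only [LinearMap.sum_apply, LinearMap.comp_apply, LinearMap.id_apply]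
      have hsum := Equiv.sum_comp e.symm (fun p : Fin n × Fin m => π p.1 (ρ p.2 x))
      rw [hsum, Fintype.sum_prod_type]
      have hinner : ∀ i, ∑ j, π i (ρ j x) = π i x := by
        intro i
        rw [← map_sum, Part.total hρ x]
      calc ∑ i, ∑ j, π i (ρ j x) = ∑ i, π i x := Finset.sum_congr rfl (fun i _ => hinner i)
        _ = x := Part.total hπ x
  case _ =>
    intro x
    have h := Equiv.sum_comp e.symm
      (fun p : Fin n × Fin m => Φ (π p.1 ∘ₗ ρ p.2) (T (π p.1 (ρ p.2 x))))
    rw [Fintype.sum_prod_type] at h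
    exact h
  case _ =>
    intro x
    have hA := Equiv.sum_comp e.symm
      (fun p : Fin n × Fin m => Φ (π p.1 ∘ₗ ρ p.2) (T (π p.1 (ρ p.2 x))))
    rw [Fintype.sum_prod_type] at hA
    refine le_trans (le_of_eq hA) ?_
    refine Finset.sum_le_sum (fun i _ => ?_)
    have hrw : ∀ j, Φ (π i ∘ₗ ρ j) (T (π i (ρ j x)))
        = Φ (π i) (Φ (ρ j) (T (ρ j (π i x)))) := by
      intro j
      rw [hΦ.2.1 (π i) (ρ j) (hπ.1 i) (hρ.1 j), hcommApp i j x]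
      rfl
    calc ∑ j, Φ (π i ∘ₗ ρ j) (T (π i (ρ j x)))
        = ∑ j, Φ (π i) (Φ (ρ j) (T (ρ j (π i x)))) := Finset.sum_congr rfl (fun j _ => hrw j)
      _ = Φ (π i) (∑ j, Φ (ρ j) (T (ρ j (π i x)))) := (map_sum _ _ _).symm
      _ ≤ Φ (π i) (T (π i x)) :=
          OP.mono (hΦ.1 (π i) (hπ.1 i)) (atomic_sum_le hΦ hTpos hToa hρ (π i x))
  case _ =>
    intro x
    have hA := Equiv.sum_comp e.symm
      (fun p : Fin n × Fin m => Φ (π p.1 ∘ₗ ρ p.2) (T (π p.1 (ρ p.2 x))))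
    rw [Fintype.sum_prod_type] at hA
    refine le_trans (le_of_eq (hA.trans Finset.sum_comm)) ?_
    refine Finset.sum_le_sum (fun j _ => ?_)
    have hrw : ∀ i, Φ (π i ∘ₗ ρ j) (T (π i (ρ j x)))
        = Φ (ρ j) (Φ (π i) (T (π i (ρ j x)))) := by
      intro i
      rw [hcomm i j, hΦ.2.1 (ρ j) (π i) (hρ.1 j) (hπ.1 i)]
      rfl
    calc ∑ i, Φ (π i ∘ₗ ρ j) (T (π i (ρ j x)))
        = ∑ i, Φ (ρ j) (Φ (π i) (T (π i (ρ j x)))) := Finset.sum_congr rfl (fun i _ => hrw i)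
      _ = Φ (ρ j) (∑ i, Φ (π i) (T (π i (ρ j x)))) := (map_sum _ _ _).symm
      _ ≤ Φ (ρ j) (T (ρ j x)) :=
          OP.mono (hΦ.1 (ρ j) (hρ.1 j)) (atomic_sum_le hΦ hTpos hToa hπ (ρ j x))

lemma two_partition {p : E →ₗ[ℝ] E} (hp : IsOrderProjection p) :
    IsPartitionOfIdentity ![p, LinearMap.id - p] := by
  refine ⟨?_, ?_, ?_⟩
  · intro i
    fin_cases i
    · simpa using hp
    · simpa using OP.compl hp
  · intro i j hij
    fin_cases i <;> fin_cases j
    · exact absurd rfl hij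
    · ext x
      simp [map_sub, hp.1 x]
    · ext x
      simp [map_sub, hp.1 x]
    · exact absurd rfl hij
  · rw [Fin.sum_univ_two]
    simp only [Matrix.cons_val_zero, Matrix.cons_val_one, Matrix.head_cons]
    ext x
    simp only [LinearMap.add_apply, LinearMap.sub_apply, LinearMap.id_apply]
    abel

lemma split_lemma (hΦ : IsBooleanHom Φ) (hTpos : ∀ x : E, 0 ≤ T x)
    (hToa : ∀ x y : E, VDisjoint x y → T (x + y) = T x + T y)
    {k : ℕ} {δ : Fin k → E →ₗ[ℝ] E} (hδ : IsPartitionOfIdentity δ)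
    {p : E →ₗ[ℝ] E} (hp : IsOrderProjection p) {x y : E} (hx : p x = x) (hy : p y = 0) :
    ∃ σ : Fin (k * 2) → E →ₗ[ℝ] E, IsPartitionOfIdentity σ ∧
      (∀ z : E, ∑ t, Φ (σ t) (T (σ t z)) ≤ ∑ i, Φ (δ i) (T (δ i z))) ∧
      (∑ t, Φ (σ t) (T (σ t (x + y))))
        = (∑ t, Φ (σ t) (T (σ t x))) + (∑ t, Φ (σ t) (T (σ t y))) := by
  obtain ⟨σ, hσ, hA, hle, -⟩ := refine_lemma hΦ hTpos hToa hδ (two_partition hp)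
  refine ⟨σ, hσ, hle, ?_⟩
  have hT0 : T 0 = 0 := by
    have h0 := hToa 0 0 (by simp [VDisjoint])
    rw [add_zero] at h0
    exact left_eq_add.mp h0
  have h1 : p (x + y) = x := by rw [map_add, hx, hy, add_zero]
  have h2 : ((LinearMap.id : E →ₗ[ℝ] E) - p) (x + y) = y := by
    simp only [LinearMap.sub_apply, LinearMap.id_apply, h1]
    abel
  have h3 : ((LinearMap.id : E →ₗ[ℝ] E) - p) x = 0 := by
    simp only [LinearMap.sub_apply, LinearMap.id_apply, hx, sub_self]
  have h4 : ((LinearMap.id : E →ₗ[ℝ] E) - p) y = y := by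
    simp only [LinearMap.sub_apply, LinearMap.id_apply, hy, sub_zero]
  rw [hA x, hA y, hA (x + y), ← Finset.sum_add_distrib]
  refine Finset.sum_congr rfl (fun i _ => ?_)
  rw [Fin.sum_univ_two, Fin.sum_univ_two, Fin.sum_univ_two]
  simp only [Matrix.cons_val_zero, Matrix.cons_val_one, Matrix.head_cons]
  rw [h1, h2, hx, hy, h3, h4]
  simp only [map_zero, hT0]
  abel

end MainLemmas

/-- the family of operators `x ↦ Σᵢ Φ(πᵢ)(T(πᵢ x))` over finite partitions of
the identity is downward directed, its pointwise infimum `R(T)` exists, and `R(T)` is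
orthogonally additive with `0 ≤ R(T) ≤ T`. -/
theorem atomic_projection_construction
    (hE : HasPPP E) (hF : DedekindComplete F)
    (Φ : (E →ₗ[ℝ] E) → (F →ₗ[ℝ] F)) (hΦ : IsBooleanHom Φ)
    (T : E → F) (hTpos : ∀ x : E, 0 ≤ T x)
    (hToa : ∀ x y : E, VDisjoint x y → T (x + y) = T x + T y) :
    -- (i) downward directedness via common refinements
    (∀ (n m : ℕ) (π : Fin n → E →ₗ[ℝ] E) (ρ : Fin m → E →ₗ[ℝ] E),
      IsPartitionOfIdentity π → IsPartitionOfIdentity ρ →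
      ∃ (k : ℕ) (σ : Fin k → E →ₗ[ℝ] E), IsPartitionOfIdentity σ ∧
        ∀ x : E, (∑ i, Φ (σ i) (T (σ i x))) ≤ (∑ i, Φ (π i) (T (π i x))) ∧
          (∑ i, Φ (σ i) (T (σ i x))) ≤ (∑ i, Φ (ρ i) (T (ρ i x)))) ∧
    -- (ii) the infimum exists
    (∀ x : E, ∃ b : F, IsGLB (atomicSumSet Φ T x) b) ∧
    -- (iii) any pointwise infimum R(T) is orthogonally additive and 0 ≤ R(T) ≤ T
    (∀ R : E → F, (∀ x : E, IsGLB (atomicSumSet Φ T x) (R x)) →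
      (∀ x y : E, VDisjoint x y → R (x + y) = R x + R y) ∧
      ∀ x : E, 0 ≤ R x ∧ R x ≤ T x) := by
  classical
  letI : IsOrderedAddMonoid F := auxOACM F
  -- basic membership and bound facts
  have hmemT : ∀ x : E, T x ∈ atomicSumSet Φ T x := by
    intro x
    refine ⟨1, fun _ => LinearMap.id, ⟨fun _ => OP.id, fun i j hij =>
      absurd (Subsingleton.elim i j) hij, by simp⟩, ?_⟩
    rw [Fin.sum_univ_one, BH.id hΦ]
    rfl
  have hlb : ∀ x : E, (0 : F) ∈ lowerBounds (atomicSumSet Φ T x) := by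
    rintro x w ⟨k, π, hπ, rfl⟩
    exact atomic_nonneg hΦ hTpos hπ.1 x
  refine ⟨?_, ?_, ?_⟩
  · -- (i) downward directedness
    intro n m π ρ hπ hρ
    obtain ⟨σ, hσ, -, h1, h2⟩ := refine_lemma hΦ hTpos hToa hπ hρ
    exact ⟨n * m, σ, hσ, fun x => ⟨h1 x, h2 x⟩⟩
  · -- (ii) existence of the infimum
    intro x
    have hne : (-(atomicSumSet Φ T x)).Nonempty := ⟨-(T x), Set.neg_mem_neg.mpr (hmemT x)⟩
    have hbdd : BddAbove (-(atomicSumSet Φ T x)) := by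
      refine ⟨0, fun u hu => ?_⟩
      rw [Set.mem_neg] at hu
      have := hlb x hu
      exact neg_nonneg.mp (by simpa using this) |>.trans (le_refl 0) |>.trans (le_refl 0)
    obtain ⟨b, hb⟩ := hF _ hne hbdd
    exact ⟨-b, isLUB_neg.mp hb⟩
  · -- (iii)
    intro R hR
    constructor
    · intro x y hxy
      obtain ⟨p, hpOP, hp1, hp2⟩ := hE x
      have hpy : p y = 0 := by
        have hd : VDisjoint (p y) y := hp2 y y (VDisjoint.symm' hxy)
        have h1 : |p y| ≤ |y| := (OP.abs_le hpOP y).trans ((hpOP.2 |y| (abs_nonneg y)).2)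
        have h2 : |p y| = 0 := by
          have h3 : |p y| ⊓ |y| = |p y| := inf_eq_left.mpr h1
          rw [← h3]
          exact hd
        exact aux_abs_eq_zero h2
      have hpx : p x = x := by
        have hd1 : VDisjoint (x - p x) x := hp1 x
        have hd2 : VDisjoint (x - p x) (p x) := VDisjoint.symm' (hp2 x (x - p x) hd1)
        have habs : |x - p x| ≤ |x| + |p x| := by
          calc |x - p x| = |x + -(p x)| := by rw [sub_eq_add_neg]
            _ ≤ |x| + |-(p x)| := abs_add_le x (-(p x))
            _ = |x| + |p x| := by rw [abs_neg]
        have h0 : |x - p x| = 0 :=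
          aux_eq_zero hd1 hd2 (abs_nonneg _) (abs_nonneg _) (abs_nonneg _) habs
        have := aux_abs_eq_zero h0
        exact (sub_eq_zero.mp this).symm
      have hge : R x + R y ≤ R (x + y) := by
        refine (hR (x + y)).2 ?_
        rintro w ⟨k, δ, hδ, rfl⟩
        obtain ⟨σ, hσ, hle, hsplit⟩ := split_lemma hΦ hTpos hToa hδ hpOP hpx hpy
        have hxmem : (∑ t, Φ (σ t) (T (σ t x))) ∈ atomicSumSet Φ T x := ⟨_, σ, hσ, rfl⟩
        have hymem : (∑ t, Φ (σ t) (T (σ t y))) ∈ atomicSumSet Φ T y := ⟨_, σ, hσ, rfl⟩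
        calc R x + R y
            ≤ (∑ t, Φ (σ t) (T (σ t x))) + (∑ t, Φ (σ t) (T (σ t y))) :=
              add_le_add ((hR x).1 hxmem) ((hR y).1 hymem)
          _ = ∑ t, Φ (σ t) (T (σ t (x + y))) := hsplit.symm
          _ ≤ ∑ i, Φ (δ i) (T (δ i (x + y))) := hle (x + y)
      have hle' : R (x + y) ≤ R x + R y := by
        have key : ∀ wy ∈ atomicSumSet Φ T y, R (x + y) - wy ≤ R x := by
          intro wy hwy
          refine (hR x).2 ?_
          rintro wx ⟨a, α, hα, rfl⟩
          obtain ⟨b2, β, hβ, hwyeq⟩ := hwy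
          obtain ⟨σ1, hσ1, -, hle1, hle2⟩ := refine_lemma hΦ hTpos hToa hα hβ
          obtain ⟨γ, hγ, hleγ, hsplitγ⟩ := split_lemma hΦ hTpos hToa hσ1 hpOP hpx hpy
          have hmem : (∑ t, Φ (γ t) (T (γ t (x + y)))) ∈ atomicSumSet Φ T (x + y) :=
            ⟨_, γ, hγ, rfl⟩
          have h5 : R (x + y) ≤ (∑ t, Φ (γ t) (T (γ t x))) + ∑ t, Φ (γ t) (T (γ t y)) := by
            rw [← hsplitγ]
            exact (hR (x + y)).1 hmem
          have h6 : (∑ t, Φ (γ t) (T (γ t x))) ≤ ∑ i, Φ (α i) (T (α i x)) :=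
            (hleγ x).trans (hle1 x)
          have h7 : (∑ t, Φ (γ t) (T (γ t y))) ≤ wy := by
            rw [hwyeq]
            exact (hleγ y).trans (hle2 y)
          have h8 := h5.trans (add_le_add h6 h7)
          exact sub_le_iff_le_add.mpr h8
        have h9 : R (x + y) - R x ∈ lowerBounds (atomicSumSet Φ T y) := by
          intro wy hwy
          exact sub_le_comm.mp (key wy hwy)
        have h10 := (hR y).2 h9
        exact sub_le_iff_le_add'.mp h10
      exact le_antisymm hle' hge
    · intro x
      exact ⟨(hR x).2 (hlb x), (hR x).1 (hmemT x)⟩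

end VL
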